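/- For all n ∈ ℕ and k ∈ ℕ: T^async_n and T'^async_n are (k,𝕏ⁿ)-equivalent, and T^async_n|_a and T'^async_n|_a are (k,𝕏ⁿ)-equivalent, where the witnessing trace equivalence is the n-stutter equivalence ≈ₙ. -/

import Mathlib

/-- The alphabet `{a, x, y, z}`. -/
inductive AXYZ : Type where
  | a : AXYZ
  | x : AXYZ
  | y : AXYZ
  | z : AXYZ
deriving DecidableEq

/-- The valuation `a ↦ b₀, x ↦ b₁, y ↦ b₂, z ↦ b₃`, written as the bit string
`b₀b₁b₂b₃`. -/
def vA (b₀ b₁ b₂ b₃ : Bool) : AXYZ → Bool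
  | .a => b₀
  | .x => b₁
  | .y => b₂
  | .z => b₃

/-- The infinite trace consisting of the given finite blocks (each block is a number of
repetitions of a valuation) followed by a constant tail. -/
def ofBlocks : List (ℕ × (AXYZ → Bool)) → (AXYZ → Bool) → ℕ → AXYZ → Bool
  | [], tail, _ => tail
  | (c, v) :: rest, tail, i => if i < c then v else ofBlocks rest tail (i - c)

/-- The block sequence `τ₀ = 1110 (1000)^{n+4} (1001)^{n+4} 1111 (1001)^{n+4} (1000)^{n+4}`. -/
def tau0blocks (n : ℕ) : List (ℕ × (AXYZ → Bool)) :=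
  [(1, vA true true true false), (n + 4, vA true false false false),
   (n + 4, vA true false false true), (1, vA true true true true),
   (n + 4, vA true false false true), (n + 4, vA true false false false)]

/-- The block sequence `τ₁ = 1111 (1001)^{n+4} (1000)^{n+4} 1110 (1000)^{n+4} (1001)^{n+4}`. -/
def tau1blocks (n : ℕ) : List (ℕ × (AXYZ → Bool)) :=
  [(1, vA true true true true), (n + 4, vA true false false true),
   (n + 4, vA true false false false), (1, vA true true true false),
   (n + 4, vA true false false false), (n + 4, vA true false false true)]

/-- `t₁ = 0000 τ₁ (1001)^ω`. -/
def t1 (n : ℕ) : ℕ → AXYZ → Bool :=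
  ofBlocks ((1, vA false false false false) :: tau1blocks n) (vA true false false true)

/-- `t₂ = 0010 τ₁ (1001)^{n+4} (1111)^ω`. -/
def t2 (n : ℕ) : ℕ → AXYZ → Bool :=
  ofBlocks (((1, vA false false true false) :: tau1blocks n) ++
    [(n + 4, vA true false false true)]) (vA true true true true)

/-- `t₃ = (0000)^{n+4} τ₀ (1001)^ω`. -/
def t3 (n : ℕ) : ℕ → AXYZ → Bool :=
  ofBlocks ((n + 4, vA false false false false) :: tau0blocks n) (vA true false false true)

/-- `t₄ = (0010)^{n+4} τ₀ (1111)^ω`. -/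
def t4 (n : ℕ) : ℕ → AXYZ → Bool :=
  ofBlocks ((n + 4, vA false false true false) :: tau0blocks n) (vA true true true true)

/-- `T^async_n = {t₁, t₂, t₃, t₄}`. -/
def Tasync (n : ℕ) : Set (ℕ → AXYZ → Bool) := {t1 n, t2 n, t3 n, t4 n}

/-- `tᵢ'`: the trace `tᵢ` with the valuation at position `2n+11` deleted. -/
def tdel (n : ℕ) (t : ℕ → AXYZ → Bool) : ℕ → AXYZ → Bool :=
  fun m => if m < 2 * n + 11 then t m else t (m + 1)

/-- `T'^async_n = {t₁', t₂', t₃', t₄'}`. -/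
def Tasync' (n : ℕ) : Set (ℕ → AXYZ → Bool) :=
  {tdel n (t1 n), tdel n (t2 n), tdel n (t3 n), tdel n (t4 n)}

/-- The alphabet `{x, y, z}` (the variable `a` hidden). -/
inductive XYZ : Type where
  | x : XYZ
  | y : XYZ
  | z : XYZ
deriving DecidableEq

/-- Restriction of a valuation over `{a,x,y,z}` to `{x,y,z}`. -/
def restr (v : AXYZ → Bool) : XYZ → Bool
  | .x => v AXYZ.x
  | .y => v AXYZ.y
  | .z => v AXYZ.z

/-- `T|_a`: the set obtained from `T` by deleting the variable `a` from every
valuation. -/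
def restrSet (T : Set (ℕ → AXYZ → Bool)) : Set (ℕ → XYZ → Bool) :=
  (fun τ => fun i => restr (τ i)) '' T

/-- Flattening of a trace assignment: an infinite trace over the alphabet `X × ℕ`
(`false` on pairs `(a, π)` with `π` outside the domain of the assignment). -/
def flat {X : Type} {T : Set (ℕ → X → Bool)} (Θ : ℕ → Option ↥T) : ℕ → (X × ℕ) → Bool :=
  fun i p => ((Θ p.2).map (fun τ => τ.1 i p.1)).getD false

/-- The domain of the assignment consists of exactly `k` trace variables. -/
def HasDomCard {X : Type} {T : Set (ℕ → X → Bool)} (Θ : ℕ → Option ↥T) (k : ℕ) : Prop :=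
  ∃ s : Finset ℕ, (∀ π, (Θ π).isSome ↔ π ∈ s) ∧ s.card = k

/-- Composition `f ∘ Θ` of a bijection `f : T → T'` with an assignment over `T`. -/
def mapAssign {X : Type} {T T' : Set (ℕ → X → Bool)} (f : ↥T ≃ ↥T') (Θ : ℕ → Option ↥T) :
    ℕ → Option ↥T' := fun π => (Θ π).map f

/-- The valuation at position `i` of `τ` is `n`-redundant: it is repeated for the next
`n+1` positions. -/
def Redundant {A : Type} (n : ℕ) (τ : ℕ → A → Bool) (i : ℕ) : Prop :=
  ∀ j, 1 ≤ j → j ≤ n + 1 → τ i = τ (i + j)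

/-- Deletion of the valuation at position `i` of an infinite trace. -/
def deleteAt {A : Type} (τ : ℕ → A → Bool) (i : ℕ) : ℕ → A → Bool :=
  fun m => if m < i then τ m else τ (m + 1)

/-- `τ ≺ₙ τ'`: `τ` is obtained from `τ'` by deleting one `n`-redundant valuation. -/
def StutterStep {A : Type} (n : ℕ) (τ τ' : ℕ → A → Bool) : Prop :=
  ∃ i, Redundant n τ' i ∧ τ = deleteAt τ' i

/-- `n`-stutter equivalence `≈ₙ`: the least equivalence relation containing `≺ₙ`. -/
def NStutterEquiv {A : Type} (n : ℕ) : (ℕ → A → Bool) → (ℕ → A → Bool) → Prop :=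
  Relation.EqvGen (StutterStep n)

/- Auxiliary lemmas -/

lemma t1_val (n m : ℕ) (h1 : 2 * n + 11 ≤ m) (h2 : m ≤ 3 * n + 14) :
    t1 n m = vA true false false false := by
  simp only [t1, tau1blocks, ofBlocks]
  rw [if_neg (by omega), if_neg (by omega), if_neg (by omega), if_neg (by omega),
    if_neg (by omega), if_pos (by omega)]

lemma t2_val (n m : ℕ) (h1 : 2 * n + 11 ≤ m) (h2 : m ≤ 3 * n + 14) :
    t2 n m = vA true false false false := by
  simp only [t2, tau1blocks, List.cons_append, List.nil_append, ofBlocks]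
  rw [if_neg (by omega), if_neg (by omega), if_neg (by omega), if_neg (by omega),
    if_neg (by omega), if_pos (by omega)]

lemma t3_val (n m : ℕ) (h1 : 2 * n + 9 ≤ m) (h2 : m ≤ 3 * n + 12) :
    t3 n m = vA true false false true := by
  simp only [t3, tau0blocks, ofBlocks]
  rw [if_neg (by omega), if_neg (by omega), if_neg (by omega), if_pos (by omega)]

lemma t4_val (n m : ℕ) (h1 : 2 * n + 9 ≤ m) (h2 : m ≤ 3 * n + 12) :
    t4 n m = vA true false false true := by
  simp only [t4, tau0blocks, ofBlocks]
  rw [if_neg (by omega), if_neg (by omega), if_neg (by omega), if_pos (by omega)]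

lemma red_t1 (n : ℕ) : Redundant n (t1 n) (2 * n + 11) := by
  intro j hj1 hj2
  rw [t1_val n _ (by omega) (by omega), t1_val n _ (by omega) (by omega)]

lemma red_t2 (n : ℕ) : Redundant n (t2 n) (2 * n + 11) := by
  intro j hj1 hj2
  rw [t2_val n _ (by omega) (by omega), t2_val n _ (by omega) (by omega)]

lemma red_t3 (n : ℕ) : Redundant n (t3 n) (2 * n + 11) := by
  intro j hj1 hj2
  rw [t3_val n _ (by omega) (by omega), t3_val n _ (by omega) (by omega)]

lemma red_t4 (n : ℕ) : Redundant n (t4 n) (2 * n + 11) := by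
  intro j hj1 hj2
  rw [t4_val n _ (by omega) (by omega), t4_val n _ (by omega) (by omega)]

lemma red_Tasync (n : ℕ) : ∀ τ : ↥(Tasync n), Redundant n τ.1 (2 * n + 11) := by
  rintro ⟨t, ht⟩
  rcases ht with h | h | h | h <;> subst h
  · exact red_t1 n
  · exact red_t2 n
  · exact red_t3 n
  · exact red_t4 n

lemma tdel_eq_deleteAt (n : ℕ) (t : ℕ → AXYZ → Bool) :
    tdel n t = deleteAt t (2 * n + 11) := rfl

lemma Tasync'_eq (n : ℕ) :
    Tasync' n = (fun t => deleteAt t (2 * n + 11)) '' Tasync n := by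
  simp only [Tasync, Tasync', Set.image_insert_eq, Set.image_singleton, tdel_eq_deleteAt]

lemma restr_deleteAt (t : ℕ → AXYZ → Bool) (i : ℕ) :
    (fun m => restr (deleteAt t i m)) = deleteAt (fun m => restr (t m)) i := by
  funext m
  simp only [deleteAt]
  split <;> rfl

lemma restrSet_image_del (n : ℕ) :
    restrSet (Tasync' n) = (fun t => deleteAt t (2 * n + 11)) '' restrSet (Tasync n) := by
  rw [Tasync'_eq, restrSet, restrSet, Set.image_image, Set.image_image]
  apply Set.image_congr
  intro t _
  exact restr_deleteAt t _

lemma red_restr {n i : ℕ} {t : ℕ → AXYZ → Bool} (h : Redundant n t i) :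
    Redundant n (fun m => restr (t m)) i := by
  intro j hj1 hj2
  exact congrArg restr (h j hj1 hj2)

lemma red_restrSet (n : ℕ) : ∀ τ : ↥(restrSet (Tasync n)), Redundant n τ.1 (2 * n + 11) := by
  rintro ⟨σ, t, ht, rfl⟩
  exact red_restr (red_Tasync n ⟨t, ht⟩)

lemma deleteAt_injOn {A : Type} {n i : ℕ} {s t : ℕ → A → Bool}
    (hs : Redundant n s i) (ht : Redundant n t i)
    (h : deleteAt s i = deleteAt t i) : s = t := by
  have hs1 : s i = s (i + 1) := hs 1 (by omega) (by omega)
  have ht1 : t i = t (i + 1) := ht 1 (by omega) (by omega)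
  funext m
  rcases lt_trichotomy m i with hm | hm | hm
  · have := congrFun h m
    simp only [deleteAt, if_pos hm] at this
    exact this
  · subst hm
    have := congrFun h m
    simp only [deleteAt, lt_irrefl, if_false, ite_self] at this
    rw [hs1, ht1]
    exact this
  · have := congrFun h (m - 1)
    simp only [deleteAt] at this
    rw [if_neg (by omega), if_neg (by omega)] at this
    have hm1 : m - 1 + 1 = m := by omega
    rwa [hm1] at this

lemma flat_redundant {X : Type} {T : Set (ℕ → X → Bool)} {n i : ℕ}
    (h : ∀ τ : ↥T, Redundant n τ.1 i) (Θ : ℕ → Option ↥T) :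
    Redundant n (flat Θ) i := by
  intro j hj1 hj2
  funext p
  simp only [flat]
  cases hΘ : Θ p.2 with
  | none => rfl
  | some τ =>
    simp only [Option.map_some, Option.getD_some]
    rw [h τ j hj1 hj2]

lemma flat_mapAssign {X : Type} {T T' : Set (ℕ → X → Bool)} {i : ℕ}
    (f : ↥T ≃ ↥T') (hf : ∀ τ : ↥T, (f τ : ℕ → X → Bool) = deleteAt τ.1 i)
    (Θ : ℕ → Option ↥T) :
    flat (mapAssign f Θ) = deleteAt (flat Θ) i := by
  funext m p
  have e1 : deleteAt (flat Θ) i m p = flat Θ (if m < i then m else m + 1) p := by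
    simp only [deleteAt]; split <;> rfl
  rw [e1]
  cases hΘ : Θ p.2 with
  | none => simp [flat, mapAssign, hΘ]
  | some τ =>
    simp only [flat, mapAssign, hΘ, Option.map_some, Option.getD_some, hf τ, deleteAt]
    split <;> rfl

lemma main_part {X : Type} (n i k : ℕ) (T T' : Set (ℕ → X → Bool))
    (hred : ∀ τ : ↥T, Redundant n τ.1 i)
    (hT' : T' = (fun t => deleteAt t i) '' T) :
    ∃ f : ↥T ≃ ↥T',
      (∀ Θ : ℕ → Option ↥T, HasDomCard Θ k →
        NStutterEquiv n (flat Θ) (flat (mapAssign f Θ))) ∧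
      (∀ Θ' : ℕ → Option ↥T', HasDomCard Θ' k →
        NStutterEquiv n (flat Θ') (flat (mapAssign f.symm Θ'))) := by
  have hmem : ∀ τ : ↥T, deleteAt τ.1 i ∈ T' := fun τ => hT' ▸ Set.mem_image_of_mem _ τ.2
  have hbij : Function.Bijective (fun τ : ↥T => (⟨deleteAt τ.1 i, hmem τ⟩ : ↥T')) := by
    constructor
    · intro a b hab
      exact Subtype.ext (deleteAt_injOn (hred a) (hred b) (congrArg Subtype.val hab))
    · rintro ⟨t', ht'⟩
      rw [hT'] at ht'
      obtain ⟨t, ht, rfl⟩ := ht'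
      exact ⟨⟨t, ht⟩, rfl⟩
  refine ⟨Equiv.ofBijective _ hbij, ?_, ?_⟩
  · intro Θ _
    exact Relation.EqvGen.symm _ _ (Relation.EqvGen.rel _ _
      ⟨i, flat_redundant hred Θ, flat_mapAssign _ (fun τ => rfl) Θ⟩)
  · intro Θ' _
    have hcomp : mapAssign (Equiv.ofBijective _ hbij)
        (mapAssign (Equiv.ofBijective _ hbij).symm Θ') = Θ' := by
      funext π
      cases hΘ : Θ' π <;> simp [mapAssign, hΘ]
      exact (Equiv.ofBijective _ hbij).apply_symm_apply _
    exact Relation.EqvGen.rel _ _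
      ⟨i, flat_redundant hred _, by
        calc flat Θ' = flat (mapAssign (Equiv.ofBijective _ hbij)
            (mapAssign (Equiv.ofBijective _ hbij).symm Θ')) := by rw [hcomp]
          _ = deleteAt (flat (mapAssign (Equiv.ofBijective _ hbij).symm Θ')) i :=
            flat_mapAssign _ (fun τ => rfl) _⟩
/-- For all `n, k ∈ ℕ`: `T^async_n` and `T'^async_n` are
`(k, 𝕏ⁿ)`-equivalent, and `T^async_n|_a` and `T'^async_n|_a` are `(k, 𝕏ⁿ)`-equivalent,
where the witnessing trace equivalence is the `n`-stutter equivalence `≈ₙ`. -/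
theorem Tasync_kXn_equiv_Tasync' (n k : ℕ) :
    (∃ f : ↥(Tasync n) ≃ ↥(Tasync' n),
      (∀ Θ : ℕ → Option ↥(Tasync n), HasDomCard Θ k →
        NStutterEquiv n (flat Θ) (flat (mapAssign f Θ))) ∧
      (∀ Θ' : ℕ → Option ↥(Tasync' n), HasDomCard Θ' k →
        NStutterEquiv n (flat Θ') (flat (mapAssign f.symm Θ')))) ∧
    (∃ g : ↥(restrSet (Tasync n)) ≃ ↥(restrSet (Tasync' n)),
      (∀ Θ : ℕ → Option ↥(restrSet (Tasync n)), HasDomCard Θ k →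
        NStutterEquiv n (flat Θ) (flat (mapAssign g Θ))) ∧
      (∀ Θ' : ℕ → Option ↥(restrSet (Tasync' n)), HasDomCard Θ' k →
        NStutterEquiv n (flat Θ') (flat (mapAssign g.symm Θ')))) := by
  constructor
  · exact main_part n (2 * n + 11) k _ _ (red_Tasync n) (Tasync'_eq n)
  · exact main_part n (2 * n + 11) k _ _ (red_restrSet n) (restrSet_image_del n)
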